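/- Let R be a commutative Noetherian ring, n ≥ 0, and suppose 0 → M → C_0 → C_1 → ⋯ → C_{n−1} → N → 0 is an exact sequence of finitely generated R-modules. Then an n-th syzygy Ω^n_R(N) belongs to |M ⊕ (⊕_{i=0}^{n−1} Ω^{i+1}_R(C_i))|_{n+1}, where |−|_k denotes the k-fold extension closure of the additive closure. -/

import Mathlib

universe u

variable (R : Type u) [CommRing R]

/-- `M` is a direct summand of `N`. -/
def DirectSummand (M N : ModuleCat.{u} R) : Prop :=
  ∃ (s : M →ₗ[R] N) (r : N →ₗ[R] M), r ∘ₗ s = LinearMap.id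

/-- `M ∈ add G` : `M` is a direct summand of a finite direct sum of copies of `G`. -/
def InAdd (G M : ModuleCat.{u} R) : Prop :=
  ∃ k : ℕ, DirectSummand R M (ModuleCat.of R (Fin k → G))

/-- `ExtClos R G n M` means `M ∈ |G|ₙ`: `|G|₀` consists of zero modules, `|G|₁ = add G`,
and for `n ≥ 2`, `M ∈ |G|ₙ` iff there is a short exact sequence `0 → Y → M ⊕ W → X → 0`
with one of `X, Y` in `|G|ₙ₋₁` and the other in `|G|₁`. -/
def ExtClos (G : ModuleCat.{u} R) : ℕ → ModuleCat.{u} R → Prop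
  | 0, M => Subsingleton M
  | 1, M => InAdd R G M
  | n + 2, M => ∃ (W X Y : ModuleCat.{u} R) (i : Y →ₗ[R] M × W)
      (p : (M × W : Type u) →ₗ[R] X),
      Function.Injective i ∧ Function.Surjective p ∧
      LinearMap.range i = LinearMap.ker p ∧
      ((ExtClos G (n + 1) Y ∧ InAdd R G X) ∨ (InAdd R G Y ∧ ExtClos G (n + 1) X))

/-- `IsSyzygy R n K M` : `K` is an `n`-th syzygy of `M` along finite free resolutions
(`Ω⁰ M = M`). -/
def IsSyzygy : ℕ → ModuleCat.{u} R → ModuleCat.{u} R → Prop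
  | 0, K, M => Nonempty (K ≃ₗ[R] M)
  | n + 1, K, M => ∃ (k : ℕ) (f : (Fin k → R) →ₗ[R] M), Function.Surjective f ∧
      IsSyzygy n K (ModuleCat.of R (LinearMap.ker f))


section Aux

variable {R}

lemma ds_refl (M : ModuleCat.{u} R) : DirectSummand R M M :=
  ⟨LinearMap.id, LinearMap.id, rfl⟩

lemma ds_trans {M N P : ModuleCat.{u} R} (h1 : DirectSummand R M N)
    (h2 : DirectSummand R N P) : DirectSummand R M P := by
  obtain ⟨s1, r1, h1⟩ := h1
  obtain ⟨s2, r2, h2⟩ := h2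
  refine ⟨s2 ∘ₗ s1, r1 ∘ₗ r2, ?_⟩
  ext x
  have e2 := LinearMap.ext_iff.mp h2 (s1 x)
  have e1 := LinearMap.ext_iff.mp h1 x
  simp only [LinearMap.comp_apply, LinearMap.id_apply] at e1 e2 ⊢
  rw [e2, e1]

lemma ds_of_equiv {M N : ModuleCat.{u} R} (e : M ≃ₗ[R] N) : DirectSummand R M N :=
  ⟨e.toLinearMap, e.symm.toLinearMap, by ext x; simp⟩

lemma ds_prodMap {M M' N N' : ModuleCat.{u} R} (h1 : DirectSummand R M M')
    (h2 : DirectSummand R N N') :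
    DirectSummand R (ModuleCat.of R (M × N)) (ModuleCat.of R (M' × N')) := by
  obtain ⟨s1, r1, h1⟩ := h1
  obtain ⟨s2, r2, h2⟩ := h2
  refine ⟨s1.prodMap s2, r1.prodMap r2, ?_⟩
  refine LinearMap.ext fun x => ?_
  have e1 := LinearMap.ext_iff.mp h1 x.1
  have e2 := LinearMap.ext_iff.mp h2 x.2
  simp only [LinearMap.comp_apply, LinearMap.id_apply, LinearMap.prodMap_apply] at e1 e2 ⊢
  exact Prod.ext_iff.mpr ⟨e1, e2⟩

lemma ds_prod_left (M N : ModuleCat.{u} R) :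
    DirectSummand R M (ModuleCat.of R (M × N)) :=
  ⟨LinearMap.inl R M N, LinearMap.fst R M N, rfl⟩

lemma ds_prod_right (M N : ModuleCat.{u} R) :
    DirectSummand R N (ModuleCat.of R (M × N)) :=
  ⟨LinearMap.inr R M N, LinearMap.snd R M N, rfl⟩

lemma ds_pi_component {m : ℕ} (φ : Fin m → ModuleCat.{u} R) (j : Fin m) :
    DirectSummand R (φ j) (ModuleCat.of R ((i : Fin m) → φ i)) := by
  refine ⟨LinearMap.single R (fun i => φ i) j, LinearMap.proj j, ?_⟩
  ext x
  exact LinearMap.ext_iff.mp (LinearMap.proj_comp_single_same R (fun i => (φ i : Type u)) j) x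

lemma ds_pi_castSucc {m : ℕ} (φ : Fin (m + 1) → ModuleCat.{u} R) :
    DirectSummand R (ModuleCat.of R ((i : Fin m) → φ i.castSucc))
      (ModuleCat.of R ((i : Fin (m + 1)) → φ i)) := by
  refine ⟨LinearMap.pi (fun i => Fin.lastCases 0 (fun i0 => LinearMap.proj i0) i),
    LinearMap.pi (fun i0 => LinearMap.proj i0.castSucc), ?_⟩
  refine LinearMap.ext fun x => ?_
  funext i0
  show (Fin.lastCases (motive := fun i => ((i' : Fin m) → (φ i'.castSucc : Type u)) →ₗ[R] (φ i : Type u))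
    0 (fun i0 => LinearMap.proj i0) i0.castSucc) x = x i0
  rw [Fin.lastCases_castSucc]
  rfl

lemma ds_pi_castSucc' {m : ℕ} (φ : Fin (m + 1) → ModuleCat.{u} R)
    (ψ : Fin m → ModuleCat.{u} R) (h : ∀ i, φ i.castSucc = ψ i) :
    DirectSummand R (ModuleCat.of R ((i : Fin m) → ψ i))
      (ModuleCat.of R ((i : Fin (m + 1)) → φ i)) := by
  have hh : (fun i => φ i.castSucc) = ψ := funext h
  subst hh
  exact ds_pi_castSucc φ

lemma ds_pow {k : ℕ} {G G' : ModuleCat.{u} R} (h : DirectSummand R G G') :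
    DirectSummand R (ModuleCat.of R (Fin k → G)) (ModuleCat.of R (Fin k → G')) := by
  obtain ⟨s, r, h⟩ := h
  refine ⟨s.compLeft (Fin k), r.compLeft (Fin k), ?_⟩
  refine LinearMap.ext fun x => ?_
  funext i
  have := LinearMap.ext_iff.mp h (x i)
  simpa using this

lemma inAdd_of_ds {G M : ModuleCat.{u} R} (h : DirectSummand R M G) : InAdd R G M := by
  refine ⟨1, ds_trans h ⟨LinearMap.pi (fun _ => LinearMap.id), LinearMap.proj 0, rfl⟩⟩

lemma inAdd_mono {G G' M : ModuleCat.{u} R} (h : DirectSummand R G G')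
    (hM : InAdd R G M) : InAdd R G' M := by
  obtain ⟨k, hk⟩ := hM
  exact ⟨k, ds_trans hk (ds_pow h)⟩

lemma extClos_mono {G G' M : ModuleCat.{u} R} (h : DirectSummand R G G') :
    ∀ {k : ℕ}, ExtClos R G k M → ExtClos R G' k M
  | 0, hM => hM
  | 1, hM => inAdd_mono h hM
  | (k + 2), hM => by
      obtain ⟨W, X, Y, i, p, h1, h2, h3, h4⟩ := hM
      refine ⟨W, X, Y, i, p, h1, h2, h3, ?_⟩
      rcases h4 with ⟨hY, hX⟩ | ⟨hY, hX⟩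
      · exact Or.inl ⟨extClos_mono h hY, inAdd_mono h hX⟩
      · exact Or.inr ⟨inAdd_mono h hY, extClos_mono h hX⟩

lemma extClos_ses {G Y X M : ModuleCat.{u} R} {k : ℕ}
    (f : Y →ₗ[R] M) (g : M →ₗ[R] X)
    (hf : Function.Injective f) (hg : Function.Surjective g)
    (hfg : LinearMap.range f = LinearMap.ker g)
    (hY : InAdd R G Y) (hX : ExtClos R G (k + 1) X) :
    ExtClos R G (k + 2) M := by
  refine ⟨ModuleCat.of R PUnit.{u+1}, X, Y, f.prod 0, g ∘ₗ LinearMap.fst R M _,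
    ?_, ?_, ?_, Or.inr ⟨hY, hX⟩⟩
  · intro a b hab
    exact hf (congrArg Prod.fst hab)
  · intro x
    obtain ⟨m, hm⟩ := hg x
    exact ⟨(m, 0), hm⟩
  · ext ⟨m, w⟩
    simp only [LinearMap.mem_range, LinearMap.mem_ker, LinearMap.comp_apply,
      LinearMap.fst_apply, LinearMap.prod_apply, Pi.prod]
    constructor
    · rintro ⟨y, hy⟩
      have : f y = m := congrArg Prod.fst hy
      rw [← this]
      have : f y ∈ LinearMap.ker g := hfg ▸ LinearMap.mem_range_self f y
      exact this
    · intro hm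
      have : m ∈ LinearMap.range f := hfg ▸ hm
      obtain ⟨y, hy⟩ := this
      exact ⟨y, by rw [Prod.ext_iff]; exact ⟨hy, Subsingleton.elim _ _⟩⟩

lemma isSyzygy_of_equiv {M M' K : ModuleCat.{u} R} (e : M ≃ₗ[R] M') {k : ℕ}
    (h : IsSyzygy R k K M) : IsSyzygy R k K M' := by
  cases k with
  | zero => exact ⟨h.some.trans e⟩
  | succ k =>
      obtain ⟨m, f, hf, hker⟩ := h
      refine ⟨m, e.toLinearMap ∘ₗ f, e.surjective.comp hf, ?_⟩
      have : LinearMap.ker (e.toLinearMap ∘ₗ f) = LinearMap.ker f := by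
        rw [LinearMap.ker_comp, LinearEquiv.ker, Submodule.comap_bot]
      rw [this]
      exact hker

end Aux
section Step

variable {R} [IsNoetherianRing R]

lemma step : ∀ (j : ℕ) (A B Z : ModuleCat.{u} R), Module.Finite R B →
    ∀ (ι : A →ₗ[R] B) (π : B →ₗ[R] Z),
    Function.Injective ι → Function.Surjective π →
    LinearMap.range ι = LinearMap.ker π →
    ∀ (T : ModuleCat.{u} R), IsSyzygy R j T A →
    ∃ (K T' : ModuleCat.{u} R) (f : K →ₗ[R] T') (g : T' →ₗ[R] T),
      IsSyzygy R (j+1) K B ∧ IsSyzygy R (j+1) T' Z ∧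
      Function.Injective f ∧ Function.Surjective g ∧
      LinearMap.range f = LinearMap.ker g := by
  intro j
  induction j with
  | zero =>
    intro A B Z hB ι π hι hπ hexact T hT
    obtain ⟨e⟩ := hT
    obtain ⟨k, f, hf⟩ := @Module.Finite.exists_fin' R B _ _ _ hB
    have hle : LinearMap.ker f ≤ LinearMap.ker (π ∘ₗ f) := LinearMap.ker_le_ker_comp f π
    set eA := LinearEquiv.ofInjective ι hι with heA
    have hmem : ∀ x : LinearMap.ker (π ∘ₗ f), f ((LinearMap.ker (π ∘ₗ f)).subtype x) ∈ LinearMap.range ι := by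
      intro x
      rw [hexact]
      exact x.2
    set c : (LinearMap.ker (π ∘ₗ f) : Type u) →ₗ[R] (LinearMap.range ι : Type u) :=
      LinearMap.codRestrict (LinearMap.range ι) (f ∘ₗ (LinearMap.ker (π ∘ₗ f)).subtype) hmem with hc
    refine ⟨ModuleCat.of R (LinearMap.ker f), ModuleCat.of R (LinearMap.ker (π ∘ₗ f)),
      Submodule.inclusion hle,
      (e.symm.toLinearMap ∘ₗ eA.symm.toLinearMap) ∘ₗ c,
      ⟨k, f, hf, ⟨LinearEquiv.refl R _⟩⟩,
      ⟨k, π ∘ₗ f, hπ.comp hf, ⟨LinearEquiv.refl R _⟩⟩,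
      Submodule.inclusion_injective hle, ?_, ?_⟩
    · -- surjectivity of g
      intro t
      obtain ⟨x, hx⟩ := hf (ι (e t))
      have hxmem : x ∈ LinearMap.ker (π ∘ₗ f) := by
        have : ι (e t) ∈ LinearMap.ker π := hexact ▸ LinearMap.mem_range_self ι (e t)
        simpa [LinearMap.mem_ker, hx] using this
      refine ⟨⟨x, hxmem⟩, ?_⟩
      have hcx : c ⟨x, hxmem⟩ = eA (e t) := by
        apply Subtype.ext
        simp [hc, heA, LinearMap.codRestrict_apply, hx, LinearEquiv.ofInjective_apply]
      show e.symm (eA.symm (c ⟨x, hxmem⟩)) = t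
      rw [hcx, LinearEquiv.symm_apply_apply, LinearEquiv.symm_apply_apply]
    · -- exactness
      ext x
      constructor
      · rintro ⟨y, rfl⟩
        have : f ((Submodule.inclusion hle y) : (Fin k → R)) = 0 := y.2
        simp only [LinearMap.mem_ker, LinearMap.comp_apply]
        have hcz : c (Submodule.inclusion hle y) = 0 := by
          apply Subtype.ext
          simpa [hc, LinearMap.codRestrict_apply] using this
        show e.symm (eA.symm (c (Submodule.inclusion hle y))) = 0
        rw [hcz, map_zero, map_zero]
      · intro hx
        have : c x = 0 := by
          have h1 : eA.symm (c x) = 0 := by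
            have := hx
            simp only [LinearMap.mem_ker, LinearMap.comp_apply] at this
            exact e.symm.injective.eq_iff.mp (by simpa using this)
          have := congrArg eA h1
          rwa [LinearEquiv.apply_symm_apply, map_zero] at this
        have hfx : f x.1 = 0 := by
          have := congrArg Subtype.val this
          simpa [hc, LinearMap.codRestrict_apply] using this
        exact ⟨⟨x.1, hfx⟩, Subtype.ext rfl⟩
  | succ j ih =>
    intro A B Z hB ι π hι hπ hexact T hT
    obtain ⟨m, gA, hgA, hTk⟩ := hT
    haveI := hB
    haveI : Module.Finite R Z := Module.Finite.of_surjective π hπ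
    obtain ⟨k, h, hh⟩ := Module.Finite.exists_fin' R Z
    obtain ⟨htil, hlift⟩ := Module.projective_lifting_property π h hπ
    set E : ((Fin (m + k) → R)) ≃ₗ[R] ((Fin m → R) × (Fin k → R)) :=
      (LinearEquiv.funCongrLeft R R finSumFinEquiv).trans
        (LinearEquiv.sumArrowLequivProdArrow (Fin m) (Fin k) R R) with hE
    set Fc : ((Fin m → R) × (Fin k → R)) →ₗ[R] B := LinearMap.coprod (ι ∘ₗ gA) htil with hFc
    set F : (Fin (m + k) → R) →ₗ[R] B := Fc ∘ₗ E.toLinearMap with hF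
    have hπι : ∀ a, π (ι a) = 0 := by
      intro a
      have : ι a ∈ LinearMap.ker π := hexact ▸ LinearMap.mem_range_self ι a
      exact this
    have hπh : ∀ y, π (htil y) = h y := fun y => LinearMap.ext_iff.mp hlift y
    have hFcsurj : Function.Surjective Fc := by
      intro b
      obtain ⟨y, hy⟩ := hh (π b)
      have : b - htil y ∈ LinearMap.ker π := by
        simp [LinearMap.mem_ker, map_sub, hπh, hy]
      rw [← hexact] at this
      obtain ⟨a, ha⟩ := this
      obtain ⟨x, hx⟩ := hgA a
      refine ⟨(x, y), ?_⟩
      simp [hFc, LinearMap.coprod_apply, hx, ha]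
    have hFsurj : Function.Surjective F := hFcsurj.comp E.surjective
    -- the new short exact sequence of kernels
    have hselfmem : ∀ x : LinearMap.ker gA, E.symm ((x : Fin m → R), (0 : Fin k → R)) ∈ LinearMap.ker F := by
      intro x
      simp only [LinearMap.mem_ker, hF, LinearMap.comp_apply, LinearEquiv.coe_coe,
        LinearEquiv.apply_symm_apply, hFc, LinearMap.coprod_apply, map_zero, add_zero,
        LinearMap.comp_apply]
      rw [show gA (x : Fin m → R) = 0 from x.2, map_zero]
    set ι' : (LinearMap.ker gA : Type u) →ₗ[R] (LinearMap.ker F : Type u) :=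
      LinearMap.codRestrict (LinearMap.ker F)
        (E.symm.toLinearMap ∘ₗ LinearMap.inl R _ _ ∘ₗ (LinearMap.ker gA).subtype) hselfmem with hι'def
    have hsndmem : ∀ w : LinearMap.ker F, (E ((LinearMap.ker F).subtype w)).2 ∈ LinearMap.ker h := by
      intro w
      have hw : F (w : Fin (m + k) → R) = 0 := w.2
      have : π (F (w : Fin (m + k) → R)) = 0 := by rw [hw, map_zero]
      simp only [hF, LinearMap.comp_apply, LinearEquiv.coe_coe, hFc,
        LinearMap.coprod_apply, map_add, LinearMap.comp_apply, hπι, zero_add, hπh] at this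
      exact this
    set π' : (LinearMap.ker F : Type u) →ₗ[R] (LinearMap.ker h : Type u) :=
      LinearMap.codRestrict (LinearMap.ker h)
        (LinearMap.snd R _ _ ∘ₗ E.toLinearMap ∘ₗ (LinearMap.ker F).subtype) hsndmem with hπ'def
    have hι'inj : Function.Injective ι' := by
      intro x y hxy
      have := congrArg Subtype.val hxy
      simp only [hι'def, LinearMap.codRestrict_apply, LinearMap.comp_apply,
        LinearMap.inl_apply] at this
      have := E.symm.injective this
      exact Subtype.ext (congrArg Prod.fst this)
    have hπ'surj : Function.Surjective π' := by
      rintro ⟨y, hy⟩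
      have hy' : h y = 0 := hy
      have : htil y ∈ LinearMap.ker π := by
        simp [LinearMap.mem_ker, hπh, hy']
      rw [← hexact] at this
      obtain ⟨a, ha⟩ := this
      obtain ⟨x, hx⟩ := hgA a
      have hmem : E.symm (-x, y) ∈ LinearMap.ker F := by
        simp only [LinearMap.mem_ker, hF, LinearMap.comp_apply, LinearEquiv.coe_coe,
          LinearEquiv.apply_symm_apply, hFc, LinearMap.coprod_apply, map_neg,
          LinearMap.comp_apply, hx, ha]
        simp
      refine ⟨⟨E.symm (-x, y), hmem⟩, ?_⟩
      apply Subtype.ext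
      show (E (E.symm (-x, y))).2 = y
      simp
    have hexact' : LinearMap.range ι' = LinearMap.ker π' := by
      ext w
      simp only [LinearMap.mem_range, LinearMap.mem_ker]
      constructor
      · rintro ⟨x, rfl⟩
        apply Subtype.ext
        show (E (E.symm ((x : Fin m → R), (0 : Fin k → R)))).2 = (0 : Fin k → R)
        simp
      · intro hw
        have h2 : (E ((w : LinearMap.ker F) : Fin (m + k) → R)).2 = 0 := by
          have := congrArg Subtype.val hw
          exact this
        have hE1 : gA (E ((w : LinearMap.ker F) : Fin (m + k) → R)).1 = 0 := by
          have hw0 : F ((w : LinearMap.ker F) : Fin (m + k) → R) = 0 := w.2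
          simp only [hF, LinearMap.comp_apply, LinearEquiv.coe_coe, hFc,
            LinearMap.coprod_apply, LinearMap.comp_apply] at hw0
          rw [show (E ((w : LinearMap.ker F) : Fin (m + k) → R)) =
            ((E ((w : LinearMap.ker F) : Fin (m + k) → R)).1,
             (E ((w : LinearMap.ker F) : Fin (m + k) → R)).2) from rfl] at hw0
          rw [h2, map_zero, add_zero] at hw0
          exact hι (by simpa using hw0)
        refine ⟨⟨(E ((w : LinearMap.ker F) : Fin (m + k) → R)).1, hE1⟩, ?_⟩
        apply Subtype.ext
        simp only [hι'def, LinearMap.codRestrict_apply, LinearMap.comp_apply,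
          LinearMap.inl_apply]
        show E.symm ((E ((w : LinearMap.ker F) : Fin (m + k) → R)).1, (0 : Fin k → R))
          = ((w : LinearMap.ker F) : Fin (m + k) → R)
        rw [← h2]
        exact (congrArg E.symm (Prod.mk.eta)).trans (E.symm_apply_apply _)
    haveI hBfin : Module.Finite R (ModuleCat.of R (LinearMap.ker F)) :=
      Module.Finite.iff_fg.mpr (IsNoetherian.noetherian _)
    obtain ⟨K, T', f, g, hK, hT', hfinj, hgsurj, hfg⟩ :=
      ih (ModuleCat.of R (LinearMap.ker gA)) (ModuleCat.of R (LinearMap.ker F))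
        (ModuleCat.of R (LinearMap.ker h)) hBfin ι' π' hι'inj hπ'surj hexact' T hTk
    exact ⟨K, T', f, g, ⟨m + k, F, hFsurj, hK⟩, ⟨k, h, hh, hT'⟩, hfinj, hgsurj, hfg⟩

end Step

/-- Given an exact sequence `0 → M → C₀ → ⋯ → C_{n-1} → N → 0` of finitely generated modules
(encoded as `C : Fin (n+2) → ModuleCat R` with `C 0 = M`, `C (n+1) = N` and exact differentials
`d`), there are syzygies `Ω^{i+1}(Cᵢ)` and `Ωⁿ(N)` such that
`Ωⁿ(N) ∈ |M ⊕ (⊕_{i=0}^{n-1} Ω^{i+1}(Cᵢ))|_{n+1}`. -/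
theorem syzygy_of_exact_sequence_in_extClos [IsNoetherianRing R] (n : ℕ)
    (C : Fin (n + 2) → ModuleCat.{u} R) (hfg : ∀ i, Module.Finite R (C i))
    (d : ∀ i : Fin (n + 1), C i.castSucc →ₗ[R] C i.succ)
    (hinj : Function.Injective (d 0))
    (hsurj : Function.Surjective (d (Fin.last n)))
    (hex : ∀ i : Fin n, LinearMap.range (d i.castSucc) = LinearMap.ker (d i.succ)) :
    ∃ (K : Fin n → ModuleCat.{u} R) (S : ModuleCat.{u} R),
      (∀ i : Fin n, IsSyzygy R (i + 1) (K i) (C i.succ.castSucc)) ∧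
      IsSyzygy R n S (C (Fin.last (n + 1))) ∧
      ExtClos R (ModuleCat.of R ((C 0 : Type u) × ((i : Fin n) → K i))) (n + 1) S := by
  have key : ∀ (j : ℕ) (hj : j ≤ n),
      ∃ (K : Fin j → ModuleCat.{u} R) (T : ModuleCat.{u} R),
        (∀ i : Fin j, IsSyzygy R (i.val + 1) (K i) (C ⟨i.val + 1, by omega⟩)) ∧
        IsSyzygy R j T (ModuleCat.of R (LinearMap.range (d ⟨j, by omega⟩))) ∧
        ExtClos R (ModuleCat.of R ((C 0 : Type u) × ((i : Fin j) → K i))) (j + 1) T := by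
    intro j
    induction j with
    | zero =>
      intro hj
      refine ⟨fun i => i.elim0, C 0, fun i => i.elim0, ?_, ?_⟩
      · have h0 : (⟨0, by omega⟩ : Fin (n + 1)) = 0 := by
          ext; simp
        rw [h0]
        exact ⟨LinearEquiv.ofInjective (d 0) hinj⟩
      · show InAdd R _ _
        exact inAdd_of_ds (ds_prod_left (C 0)
          (ModuleCat.of R ((i : Fin 0) → ((i.elim0 : ModuleCat.{u} R) : Type u))))
    | succ j ihQ =>
      intro hj
      obtain ⟨K, T, hK, hT, hE⟩ := ihQ (by omega)
      have hj1 : j < n + 1 := by omega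
      have hj2 : j + 1 < n + 1 := by omega
      have hj3 : j + 1 < n + 2 := by omega
      have hexact : LinearMap.range ((LinearMap.range (d ⟨j, hj1⟩)).subtype) =
          LinearMap.ker ((d ⟨j + 1, hj2⟩).rangeRestrict) := by
        rw [Submodule.range_subtype, LinearMap.ker_rangeRestrict]
        exact hex ⟨j, by omega⟩
      obtain ⟨Knew, T', f, g, hKnew, hT', hfinj, hgsurj, hfg'⟩ :=
        step j (ModuleCat.of R (LinearMap.range (d ⟨j, hj1⟩)))
          (C ⟨j + 1, hj3⟩)
          (ModuleCat.of R (LinearMap.range (d ⟨j + 1, hj2⟩)))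
          (hfg _)
          ((LinearMap.range (d ⟨j, hj1⟩)).subtype)
          ((d ⟨j + 1, hj2⟩).rangeRestrict)
          (Submodule.injective_subtype _)
          (LinearMap.surjective_rangeRestrict _)
          hexact T hT
      set K' : Fin (j + 1) → ModuleCat.{u} R :=
        fun i => if h : (i : ℕ) < j then K ⟨i, h⟩ else Knew with hK'
      have hlast : K' (Fin.last j) = Knew := dif_neg (by simp)
      have hcs : ∀ i0 : Fin j, K' i0.castSucc = K i0 := fun i0 => dif_pos i0.isLt
      have ds1 : DirectSummand R (ModuleCat.of R ((i : Fin j) → K i))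
          (ModuleCat.of R ((i : Fin (j + 1)) → K' i)) := ds_pi_castSucc' K' K hcs
      have dsG : DirectSummand R (ModuleCat.of R ((C 0 : Type u) × ((i : Fin j) → K i)))
          (ModuleCat.of R ((C 0 : Type u) × ((i : Fin (j + 1)) → K' i))) :=
        ds_prodMap (ds_refl (C 0)) ds1
      have hE' := extClos_mono dsG hE
      have hInAddKnew : InAdd R (ModuleCat.of R ((C 0 : Type u) × ((i : Fin (j + 1)) → K' i))) Knew := by
        have hd := ds_pi_component K' (Fin.last j)
        rw [hlast] at hd
        exact inAdd_of_ds (ds_trans hd (ds_prod_right _ _))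
      refine ⟨K', T', ?_, hT', extClos_ses f g hfinj hgsurj hfg' hInAddKnew hE'⟩
      intro i
      refine Fin.lastCases ?_ ?_ i
      · rw [hlast]
        exact hKnew
      · intro i0
        rw [hcs i0]
        exact hK i0
  obtain ⟨K, T, hK, hT, hE⟩ := key n le_rfl
  refine ⟨K, T, fun i => hK i, ?_, hE⟩
  exact isSyzygy_of_equiv
    (LinearEquiv.ofTop _ (LinearMap.range_eq_top.mpr hsurj)) hT
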